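/- arXiv:1608.07144 — 3 statements merged into one kernel-verified Lean document; each statement's English description precedes it below -/
import Mathlib

section
/- Let κ, λ, μ and ν be infinite cardinals such that κ is regular and κ ≤ cf(λ) ≤ λ ≤ μ ≤ ν. Then there exist a set Z with |Z| = ν and a free filter p on Z such that the filter space Z_p is weakly p-orderable, ψ(Z_p) = κ, a(Z_p) = λ and ‖p‖ = μ. -/
open Set

universe u v w y

/-- The filter space topology on `Option X`: every point `some x` is isolated, and the
neighborhoods of the extra point `none` are the sets `P ∪ {none}` with `P ∈ p`. -/
def filterTop {X : Type u} (p : Filter X) : TopologicalSpace (Option X) where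
  IsOpen U := none ∈ U → (Option.some ⁻¹' U) ∈ p
  isOpen_univ := fun _ => by simp
  isOpen_inter := fun U V hU hV h => by
    rw [Set.preimage_inter]
    exact Filter.inter_mem (hU h.1) (hV h.2)
  isOpen_sUnion := fun S hS h => by
    rw [Set.mem_sUnion] at h
    obtain ⟨U, hUS, hU⟩ := h
    exact Filter.mem_of_superset (hS U hUS hU)
      (Set.preimage_mono (Set.subset_sUnion_of_mem hUS))

/-- A filter is free if `∅ ∉ p` and the intersection of all its members is empty. -/
def IsFree {X : Type u} (p : Filter X) : Prop :=
  (∅ : Set X) ∉ p ∧ ⋂₀ {P : Set X | P ∈ p} = ∅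

/-- A family of sets is nested if any two members are comparable under inclusion. -/
def Nested {X : Type u} (F : Set (Set X)) : Prop :=
  ∀ P ∈ F, ∀ Q ∈ F, P ⊆ Q ∨ Q ⊆ P

/-- The order topology of a linear order: generated by the open rays. -/
def ordTop {Z : Type u} (r : LinearOrder Z) : TopologicalSpace Z :=
  TopologicalSpace.generateFrom
    {S : Set Z | ∃ a : Z, S = {z | r.lt z a} ∨ S = {z | r.lt a z}}

/-- `(Z, t)` is weakly orderable by the linear order `r`: the order topology of `r`
is contained in `t`. -/
def WOBy {Z : Type u} (t : TopologicalSpace Z) (r : LinearOrder Z) : Prop :=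
  ∀ S : Set Z, (ordTop r).IsOpen S → t.IsOpen S

def WeaklyOrderable {Z : Type u} (t : TopologicalSpace Z) : Prop :=
  ∃ r : LinearOrder Z, WOBy t r

/-- Weakly `p`-orderable: weakly orderable by a linear order in which `p` is the maximum. -/
def WeaklyPOrderable {Z : Type u} (t : TopologicalSpace Z) (p : Z) : Prop :=
  ∃ r : LinearOrder Z, WOBy t r ∧ ∀ z : Z, r.le z p

def Orderable {Z : Type u} (t : TopologicalSpace Z) : Prop :=
  ∃ r : LinearOrder Z, ordTop r = t

/-- `p`-orderable: orderable by a linear order in which `p` is the maximum. -/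
def POrderable {Z : Type u} (t : TopologicalSpace Z) (p : Z) : Prop :=
  ∃ r : LinearOrder Z, ordTop r = t ∧ ∀ z : Z, r.le z p

/-- The approaching number of a point `p`: the least cardinality of a set
`A ⊆ Z \ {p}` with `p ∈ closure A`. -/
noncomputable def aNum {Z : Type u} (t : TopologicalSpace Z) (p : Z) : Cardinal.{u} :=
  sInf {c : Cardinal.{u} | ∃ A : Set Z, p ∉ A ∧ p ∈ @closure Z t A ∧ c = Cardinal.mk ↥A}

/-- The pseudo-character of a point `p`: the least cardinality of a family of open sets
whose intersection is `{p}`. -/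
noncomputable def psiNum {Z : Type u} (t : TopologicalSpace Z) (p : Z) : Cardinal.{u} :=
  sInf {c : Cardinal.{u} | ∃ Us : Set (Set Z),
    (∀ V ∈ Us, t.IsOpen V) ∧ ⋂₀ Us = {p} ∧ c = Cardinal.mk ↥Us}

/-- The approaching number of a space: minimum over non-isolated points. -/
noncomputable def aSp {Z : Type u} (t : TopologicalSpace Z) : Cardinal.{u} :=
  sInf {c : Cardinal.{u} | ∃ p : Z, ¬ t.IsOpen ({p} : Set Z) ∧ c = aNum t p}

/-- The pseudo-character of a space: supremum over points. -/
noncomputable def psiSp {Z : Type u} (t : TopologicalSpace Z) : Cardinal.{u} :=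
  ⨆ p : Z, psiNum t p

/-- `‖p‖ = min {|P| : P ∈ p}`. -/
noncomputable def fNorm {X : Type u} (p : Filter X) : Cardinal.{u} :=
  sInf {c : Cardinal.{u} | ∃ P ∈ p, c = Cardinal.mk ↥P}

/-- A selection relation: total and antisymmetric. -/
def SelRel {Z : Type u} (R : Z → Z → Prop) : Prop :=
  (∀ x y : Z, R x y ∨ R y x) ∧ (∀ x y : Z, R x y → R y x → x = y)

/-- Separate continuity of a selection relation: the open rays are open. -/
def SepCont {Z : Type u} (t : TopologicalSpace Z) (R : Z → Z → Prop) : Prop :=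
  ∀ x : Z, t.IsOpen {z | R z x ∧ z ≠ x} ∧ t.IsOpen {z | R x z ∧ x ≠ z}

/-- Continuity of a selection relation (Gutev–Nogura characterization). -/
def ContSel {Z : Type u} (t : TopologicalSpace Z) (R : Z → Z → Prop) : Prop :=
  ∀ x y : Z, R x y → x ≠ y →
    ∃ U V : Set Z, t.IsOpen U ∧ t.IsOpen V ∧ x ∈ U ∧ y ∈ V ∧
      ∀ u ∈ U, ∀ v ∈ V, R u v ∧ u ≠ v

/-- The subspace topology. -/
def subTop {Z : Type u} (t : TopologicalSpace Z) (S : Set Z) : TopologicalSpace ↥S :=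
  TopologicalSpace.induced Subtype.val t

/-- The product topology. -/
def prodTop {A : Type u} {B : Type v} (tA : TopologicalSpace A) (tB : TopologicalSpace B) :
    TopologicalSpace (A × B) :=
  TopologicalSpace.induced Prod.fst tA ⊓ TopologicalSpace.induced Prod.snd tB

/-- `C` is a club (closed unbounded) subset of the ordinal `o`. -/
def Club (o : Ordinal.{u}) (C : Set Ordinal.{u}) : Prop :=
  C ⊆ Set.Iio o ∧ (∀ α < o, ∃ β ∈ C, α ≤ β) ∧
  (∀ α < o, Order.IsSuccLimit α → (∀ β < α, ∃ γ ∈ C, β ≤ γ ∧ γ < α) → α ∈ C)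

/-- `S` is a stationary subset of the ordinal `o`. -/
def StationaryIn (o : Ordinal.{u}) (S : Set Ordinal.{u}) : Prop :=
  S ⊆ Set.Iio o ∧ ∀ C : Set Ordinal.{u}, Club o C → (S ∩ C).Nonempty

namespace Stmt10Proof

open Cardinal

/-- Any family of fewer than `κ` elements of `κ.ord.ToType` (`κ` regular) is bounded. -/
lemma exists_bound {κ : Cardinal.{u}} (hκ : ℵ₀ ≤ κ) (hreg : κ.ord.cof = κ)
    {ι : Type u} (f : ι → κ.ord.ToType) (hι : #ι < κ) :
    ∃ b : κ.ord.ToType, ∀ i, f i < b := by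
  have hlim : Order.IsSuccLimit κ.ord := Cardinal.isSuccLimit_ord hκ
  set T : κ.ord.ToType → Ordinal.{u} := fun x => @Ordinal.typein κ.ord.ToType (· < ·) isWellOrder_lt x
    with hT
  have hs : (⨆ i, T (f i)) < κ.ord :=
    Ordinal.iSup_lt_ord (by rwa [hreg]) fun i => Ordinal.typein_lt_self _
  have hss : Order.succ (⨆ i, T (f i)) < κ.ord := hlim.succ_lt hs
  refine ⟨Ordinal.ToType.mk (o := κ.ord) ⟨_, hss⟩, fun i => ?_⟩
  rw [← (Ordinal.ToType.mk (o := κ.ord)).symm.lt_iff_lt, OrderIso.symm_apply_apply]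
  rw [← Subtype.coe_lt_coe]
  exact (Ordinal.le_iSup (fun i => T (f i)) i).trans_lt (Order.lt_succ _)

lemma exists_not_mem {α : Type u} {S : Set α} (h : #S < #α) : ∃ u, u ∉ S := by
  by_contra h'
  push_neg at h'
  rw [Set.eq_univ_of_forall h', Cardinal.mk_univ] at h
  exact lt_irrefl _ h

/-- The filter on `(κ.ord.ToType × μ.ord.ToType) ⊕ ν.ord.ToType` generated by the sets
`{inl x | a < x.1 ∧ x.2 ∉ S}` with `|S| < lam`. -/
def fil (κ lam μ ν : Cardinal.{u}) (hκ : ℵ₀ ≤ κ) (hlam : ℵ₀ ≤ lam) :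
    Filter ((κ.ord.ToType × μ.ord.ToType) ⊕ ν.ord.ToType) where
  sets := {P | ∃ (a : κ.ord.ToType) (S : Set μ.ord.ToType), #S < lam ∧
    ∀ x : κ.ord.ToType × μ.ord.ToType, a < x.1 → x.2 ∉ S → Sum.inl x ∈ P}
  univ_sets := by
    have hne : Nonempty κ.ord.ToType := by
      rw [Ordinal.nonempty_toType_iff]
      have : (0 : Cardinal).ord < κ.ord := Cardinal.ord_lt_ord.mpr (aleph0_pos.trans_le hκ)
      rw [Cardinal.ord_zero] at this
      exact this.ne'
    exact ⟨Classical.arbitrary _, ∅, by simpa using aleph0_pos.trans_le hlam,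
      fun _ _ _ => trivial⟩
  sets_of_superset := by
    rintro P Q ⟨a, S, hS, h⟩ hPQ
    exact ⟨a, S, hS, fun x h1 h2 => hPQ (h x h1 h2)⟩
  inter_sets := by
    rintro P Q ⟨a, S, hS, h⟩ ⟨a', S', hS', h'⟩
    refine ⟨max a a', S ∪ S', ?_, fun x h1 h2 => ?_⟩
    · exact (Cardinal.mk_union_le _ _).trans_lt (Cardinal.add_lt_of_lt hlam hS hS')
    · rw [Set.mem_union] at h2
      push_neg at h2
      exact ⟨h x (max_lt_iff.mp h1).1 h2.1, h' x (max_lt_iff.mp h1).2 h2.2⟩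

lemma mem_fil {κ lam μ ν : Cardinal.{u}} {hκ : ℵ₀ ≤ κ} {hlam : ℵ₀ ≤ lam}
    {P : Set ((κ.ord.ToType × μ.ord.ToType) ⊕ ν.ord.ToType)} :
    P ∈ fil κ lam μ ν hκ hlam ↔ ∃ (a : κ.ord.ToType) (S : Set μ.ord.ToType), #S < lam ∧
      ∀ x : κ.ord.ToType × μ.ord.ToType, a < x.1 → x.2 ∉ S → Sum.inl x ∈ P :=
  Iff.rfl

/-- The basic generating sets of the filter. -/
def gen (κ μ ν : Cardinal.{u}) (a : κ.ord.ToType) (S : Set μ.ord.ToType) :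
    Set ((κ.ord.ToType × μ.ord.ToType) ⊕ ν.ord.ToType) :=
  Sum.inl '' {x | a < x.1 ∧ x.2 ∉ S}

lemma gen_mem {κ lam μ ν : Cardinal.{u}} (hκ : ℵ₀ ≤ κ) (hlam : ℵ₀ ≤ lam)
    {a : κ.ord.ToType} {S : Set μ.ord.ToType} (hS : #S < lam) :
    gen κ μ ν a S ∈ fil κ lam μ ν hκ hlam :=
  ⟨a, S, hS, fun x h1 h2 => ⟨x, ⟨h1, h2⟩, rfl⟩⟩

/-- The order embedding of `Option Z` into a lexicographic order with top. -/
def emb (κ μ ν : Cardinal.{u}) :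
    Option ((κ.ord.ToType × μ.ord.ToType) ⊕ ν.ord.ToType) →
      WithTop (ν.ord.ToType ⊕ₗ (κ.ord.ToType ×ₗ μ.ord.ToType)) :=
  Option.map fun z => toLex (Sum.map id toLex z.swap)

lemma emb_inj (κ μ ν : Cardinal.{u}) : Function.Injective (emb κ μ ν) :=
  Option.map_injective (toLex.injective.comp
    ((Function.injective_id.sumMap toLex.injective).comp
      (Function.LeftInverse.injective (g := Sum.swap) Sum.swap_swap)))

/-- The linear order witnessing weak `p`-orderability. -/
noncomputable def rOrd (κ μ ν : Cardinal.{u}) :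
    LinearOrder (Option ((κ.ord.ToType × μ.ord.ToType) ⊕ ν.ord.ToType)) :=
  LinearOrder.lift' (emb κ μ ν) (emb_inj κ μ ν)

lemma rOrd_lt {κ μ ν : Cardinal.{u}}
    {x y : Option ((κ.ord.ToType × μ.ord.ToType) ⊕ ν.ord.ToType)} :
    (rOrd κ μ ν).lt x y ↔ emb κ μ ν x < emb κ μ ν y := Iff.rfl

lemma rOrd_le {κ μ ν : Cardinal.{u}}
    {x y : Option ((κ.ord.ToType × μ.ord.ToType) ⊕ ν.ord.ToType)} :
    (rOrd κ μ ν).le x y ↔ emb κ μ ν x ≤ emb κ μ ν y := Iff.rfl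

end Stmt10Proof
/-- For infinite cardinals `κ ≤ cf(λ) ≤ λ ≤ μ ≤ ν` with `κ` regular, there is
a set `Z` with `|Z| = ν` and a free filter `p` on `Z` such that `Z_p` is weakly
`p`-orderable, `ψ(Z_p) = κ`, `a(Z_p) = λ` and `‖p‖ = μ`. -/
theorem stmt10 (κ lam μ ν : Cardinal.{u})
    (hκ : Cardinal.aleph0 ≤ κ) (hlam : Cardinal.aleph0 ≤ lam)
    (hμ : Cardinal.aleph0 ≤ μ) (hν : Cardinal.aleph0 ≤ ν)
    (hregκ : κ.ord.cof = κ)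
    (h1 : κ ≤ lam.ord.cof) (h2 : lam ≤ μ) (h3 : μ ≤ ν) :
    ∃ (Z : Type u) (p : Filter Z), Cardinal.mk Z = ν ∧ IsFree p ∧
      WeaklyPOrderable (filterTop p) (none : Option Z) ∧
      psiNum (filterTop p) (none : Option Z) = κ ∧
      aNum (filterTop p) (none : Option Z) = lam ∧
      fNorm p = μ := by
  classical
  open Cardinal in
  obtain ⟨hKne, hUne, hnomax, mkK, mkU, mkW, hκlam, hκμ⟩ :
      Nonempty κ.ord.ToType ∧ Nonempty μ.ord.ToType ∧ NoMaxOrder κ.ord.ToType ∧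
      Cardinal.mk κ.ord.ToType = κ ∧ Cardinal.mk μ.ord.ToType = μ ∧ Cardinal.mk ν.ord.ToType = ν ∧ κ ≤ lam ∧ κ ≤ μ := by
    have hne : ∀ c : Cardinal.{u}, ℵ₀ ≤ c → Nonempty c.ord.ToType := by
      intro c hc
      rw [Ordinal.nonempty_toType_iff]
      have : (0 : Cardinal).ord < c.ord := Cardinal.ord_lt_ord.mpr (aleph0_pos.trans_le hc)
      rw [Cardinal.ord_zero] at this
      exact this.ne'
    have hmk : ∀ c : Cardinal.{u}, #c.ord.ToType = c := by
      intro c; rw [Cardinal.mk_ord_toType]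
    have hκlam : κ ≤ lam := h1.trans (Ordinal.cof_ord_le lam)
    exact ⟨hne κ hκ, hne μ hμ, Cardinal.noMaxOrder hκ, hmk κ, hmk μ, hmk ν,
      hκlam, hκlam.trans h2⟩
  refine ⟨(κ.ord.ToType × μ.ord.ToType) ⊕ ν.ord.ToType,
    Stmt10Proof.fil κ lam μ ν hκ hlam, ?_, ?_, ?_, ?_, ?_, ?_⟩
  · -- cardinality
    simp only [Cardinal.mk_sum, Cardinal.mk_prod, Cardinal.lift_id, mkK, mkU, mkW]
    rw [Cardinal.mul_eq_max hκ hμ, max_eq_right hκμ, Cardinal.add_eq_right hν h3]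
  · -- free
    constructor
    · rintro ⟨a, S, hS, h⟩
      obtain ⟨b, hb⟩ := exists_gt a
      obtain ⟨u, hu⟩ := Stmt10Proof.exists_not_mem (hS.trans_le (h2.trans mkU.ge))
      exact h (b, u) hb hu
    · refine Set.eq_empty_iff_forall_notMem.mpr fun z hz => ?_
      rw [Set.mem_sInter] at hz
      match z with
      | Sum.inl x =>
          have := hz _ (Set.mem_setOf_eq ▸
            Stmt10Proof.gen_mem (a := x.1) (S := ∅) (ν := ν) hκ hlam
              (by simpa using aleph0_pos.trans_le hlam))
          obtain ⟨y, ⟨hy1, _⟩, hy⟩ := this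
          rw [Sum.inl.injEq] at hy
          exact absurd (hy ▸ hy1) (lt_irrefl _)
      | Sum.inr w =>
          have := hz _ (Set.mem_setOf_eq ▸
            Stmt10Proof.gen_mem (a := Classical.arbitrary _) (S := ∅) (ν := ν) hκ hlam
              (by simpa using aleph0_pos.trans_le hlam))
          obtain ⟨y, _, hy⟩ := this
          exact Sum.inl_ne_inr hy
  · -- weakly p-orderable
    refine ⟨Stmt10Proof.rOrd κ μ ν, ?_, fun z => Stmt10Proof.rOrd_le.mpr le_top⟩
    intro S hS
    change TopologicalSpace.GenerateOpen _ S at hS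
    induction hS with
    | basic s hs =>
        obtain ⟨a, rfl | rfl⟩ := hs
        · exact fun hn => absurd (Stmt10Proof.rOrd_lt.mp hn) not_top_lt
        · intro hn
          match a with
          | none => exact absurd (Stmt10Proof.rOrd_lt.mp hn) (lt_irrefl _)
          | some (Sum.inl x) =>
              refine ⟨x.1, ∅, by simpa using aleph0_pos.trans_le hlam, fun y h1 _ => ?_⟩
              refine Stmt10Proof.rOrd_lt.mpr ?_
              refine WithTop.coe_lt_coe.mpr ?_
              exact Sum.Lex.inr_lt_inr_iff.mpr (Prod.Lex.lt_iff.mpr (Or.inl h1))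
          | some (Sum.inr w) =>
              refine ⟨Classical.arbitrary _, ∅, by simpa using aleph0_pos.trans_le hlam,
                fun y _ _ => ?_⟩
              exact Stmt10Proof.rOrd_lt.mpr (WithTop.coe_lt_coe.mpr (Sum.Lex.inl_lt_inr _ _))
    | univ => exact fun _ => Filter.univ_mem
    | inter s t _ _ ihs iht =>
        exact (filterTop (Stmt10Proof.fil κ lam μ ν hκ hlam)).isOpen_inter s t ihs iht
    | sUnion S _ ih =>
        exact (filterTop (Stmt10Proof.fil κ lam μ ν hκ hlam)).isOpen_sUnion S ih
  · -- psi
    have hposlam : #(∅ : Set μ.ord.ToType) < lam := by simpa using aleph0_pos.trans_le hlam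
    set V : κ.ord.ToType → Set (Option ((κ.ord.ToType × μ.ord.ToType) ⊕ ν.ord.ToType)) :=
      fun a => insert none (Option.some '' Stmt10Proof.gen κ μ ν a ∅) with hV
    have hVopen : ∀ a, (filterTop (Stmt10Proof.fil κ lam μ ν hκ hlam)).IsOpen (V a) := by
      intro a _
      refine ⟨a, ∅, hposlam, fun x h1 h2 => ?_⟩
      exact Set.mem_insert_iff.mpr (Or.inr ⟨Sum.inl x, ⟨x, ⟨h1, h2⟩, rfl⟩, rfl⟩)
    have hVmem : ∀ a b : κ.ord.ToType, ∀ u : μ.ord.ToType, a < b →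
        (some (Sum.inl (b, u)) : Option _) ∈ V a := fun a b u h =>
      Set.mem_insert_iff.mpr (Or.inr ⟨Sum.inl (b, u), ⟨(b, u), ⟨h, Set.notMem_empty _⟩, rfl⟩, rfl⟩)
    have hVnotmem : ∀ a (z : (κ.ord.ToType × μ.ord.ToType) ⊕ ν.ord.ToType),
        (some z : Option _) ∈ V a → ∃ x, z = Sum.inl x ∧ a < x.1 := by
      intro a z h
      rcases Set.mem_insert_iff.mp h with h | ⟨y, ⟨x, ⟨hx1, _⟩, hxy⟩, hy⟩
      · exact absurd h (by simp)
      · rw [Option.some.injEq] at hy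
        exact ⟨x, by rw [← hy, ← hxy], hx1⟩
    have hmem : κ ∈ {c | ∃ Us : Set (Set (Option ((κ.ord.ToType × μ.ord.ToType) ⊕ ν.ord.ToType))),
        (∀ W ∈ Us, (filterTop (Stmt10Proof.fil κ lam μ ν hκ hlam)).IsOpen W) ∧
        ⋂₀ Us = {none} ∧ c = #↥Us} := by
      refine ⟨Set.range V, fun W hW => ?_, ?_, ?_⟩
      · obtain ⟨a, rfl⟩ := hW; exact hVopen a
      · ext z
        simp only [Set.mem_sInter, Set.mem_range, forall_exists_index, forall_apply_eq_imp_iff,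
          Set.mem_singleton_iff]
        constructor
        · intro hz
          match z with
          | none => rfl
          | some (Sum.inl x) =>
              obtain ⟨x', hx', hlt1⟩ := hVnotmem x.1 _ (hz x.1)
              rw [Sum.inl.injEq] at hx'
              cases hx'
              exact absurd hlt1 (lt_irrefl _)
          | some (Sum.inr w) =>
              obtain ⟨x', hx', -⟩ := hVnotmem (Classical.arbitrary _) _ (hz _)
              exact (Sum.inr_ne_inl hx').elim
        · rintro rfl a; exact Set.mem_insert _ _
      · have hVinj : Function.Injective V := by
          intro a b hab
          by_contra hne
          obtain ⟨u0⟩ := hUne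
          rcases lt_or_gt_of_ne hne with h | h
          · obtain ⟨x, hx, hlt1⟩ := hVnotmem b _ (hab ▸ hVmem a b u0 h)
            rw [Sum.inl.injEq] at hx
            cases hx
            exact absurd hlt1 (lt_irrefl b)
          · obtain ⟨x, hx, hlt1⟩ := hVnotmem a _ (hab.symm ▸ hVmem b a u0 h)
            rw [Sum.inl.injEq] at hx
            cases hx
            exact absurd hlt1 (lt_irrefl a)
        rw [Cardinal.mk_range_eq V hVinj, mkK]
    refine le_antisymm (csInf_le' hmem) (le_csInf ⟨κ, hmem⟩ ?_)
    rintro c ⟨Us, hopen, hInt, rfl⟩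
    by_contra hlt
    push_neg at hlt
    have h0 : (none : Option ((κ.ord.ToType × μ.ord.ToType) ⊕ ν.ord.ToType)) ∈ ⋂₀ Us := by
      rw [hInt]; rfl
    have hch : ∀ W : ↥Us, ∃ (a : κ.ord.ToType) (S : Set μ.ord.ToType), #S < lam ∧
        ∀ x : κ.ord.ToType × μ.ord.ToType, a < x.1 → x.2 ∉ S →
          (some (Sum.inl x) : Option _) ∈ W.1 := by
      intro W
      obtain ⟨a, S, hS, h⟩ := hopen W.1 W.2 (Set.mem_sInter.mp h0 W.1 W.2)
      exact ⟨a, S, hS, fun x h1 h2 => h x h1 h2⟩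
    choose af Sf hSf hf using hch
    obtain ⟨b, hb⟩ := Stmt10Proof.exists_bound hκ hregκ af hlt
    have hUn : #(⋃ W, Sf W) < lam :=
      (Cardinal.mk_iUnion_le _).trans_lt
        (Cardinal.mul_lt_of_lt hlam (hlt.trans_le hκlam)
          (Ordinal.iSup_lt (hlt.trans_le h1) hSf))
    obtain ⟨u, hu⟩ := Stmt10Proof.exists_not_mem (hUn.trans_le (h2.trans mkU.ge))
    have hin : (some (Sum.inl (b, u)) : Option _) ∈ ⋂₀ Us :=
      Set.mem_sInter.mpr fun W hW => hf ⟨W, hW⟩ (b, u) (hb _)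
        (fun hin => hu (Set.mem_iUnion.mpr ⟨⟨W, hW⟩, hin⟩))
    rw [hInt] at hin
    exact Option.some_ne_none _ hin
  · -- aNum
    obtain ⟨E, hE⟩ := Cardinal.le_mk_iff_exists_set.mp (h2.trans mkU.ge)
    have hmem : lam ∈ {c | ∃ A : Set (Option ((κ.ord.ToType × μ.ord.ToType) ⊕ ν.ord.ToType)),
        none ∉ A ∧ none ∈ @closure _ (filterTop (Stmt10Proof.fil κ lam μ ν hκ hlam)) A ∧
        c = #↥A} := by
      refine ⟨Option.some '' (Sum.inl '' (Set.univ ×ˢ E)), by simp, ?_, ?_⟩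
      · letI : TopologicalSpace (Option ((κ.ord.ToType × μ.ord.ToType) ⊕ ν.ord.ToType)) :=
          filterTop (Stmt10Proof.fil κ lam μ ν hκ hlam)
        rw [mem_closure_iff]
        intro o ho hno
        obtain ⟨a, S, hS, h⟩ := ho hno
        obtain ⟨b, hb⟩ := exists_gt a
        have hES : ¬ E ⊆ S := fun hES =>
          absurd (hE ▸ Cardinal.mk_le_mk_of_subset hES) (not_le.mpr hS)
        obtain ⟨u, huE, huS⟩ := Set.not_subset.mp hES
        exact ⟨some (Sum.inl (b, u)), h (b, u) hb huS,
          ⟨Sum.inl (b, u), ⟨(b, u), ⟨trivial, huE⟩, rfl⟩, rfl⟩⟩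
      · rw [Cardinal.mk_image_eq (Option.some_injective _),
          Cardinal.mk_image_eq Sum.inl_injective,
          Cardinal.mk_congr (Equiv.Set.prod _ _), Cardinal.mk_prod, Cardinal.lift_id,
          Cardinal.lift_id, Cardinal.mk_univ, mkK, hE,
          Cardinal.mul_eq_max hκ hlam, max_eq_right hκlam]
    refine le_antisymm (csInf_le' hmem) (le_csInf ⟨lam, hmem⟩ ?_)
    rintro c ⟨A, hA, hcl, rfl⟩
    by_contra hlt
    push_neg at hlt
    set A₂ : Set μ.ord.ToType :=
      {u | ∃ k, (some (Sum.inl (k, u)) : Option ((κ.ord.ToType × μ.ord.ToType) ⊕ ν.ord.ToType)) ∈ A}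
      with hA₂def
    have hA₂ : #↥A₂ ≤ #↥A := by
      refine Cardinal.mk_le_of_injective
        (f := fun u : ↥A₂ => (⟨some (Sum.inl (u.2.choose, u.1)), u.2.choose_spec⟩ : ↥A)) ?_
      intro u1 u2 h
      have := congrArg Subtype.val h
      simp only [Option.some.injEq, Sum.inl.injEq, Prod.mk.injEq] at this
      exact Subtype.ext this.2
    have hA₂lam : #↥A₂ < lam := hA₂.trans_lt hlt
    obtain ⟨a0⟩ := hKne
    have hop : (filterTop (Stmt10Proof.fil κ lam μ ν hκ hlam)).IsOpen
        (insert none (Option.some '' Stmt10Proof.gen κ μ ν a0 A₂)) := fun _ =>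
      ⟨a0, A₂, hA₂lam, fun x h1 h2 =>
        Set.mem_insert_iff.mpr (Or.inr ⟨Sum.inl x, ⟨x, ⟨h1, h2⟩, rfl⟩, rfl⟩)⟩
    letI : TopologicalSpace (Option ((κ.ord.ToType × μ.ord.ToType) ⊕ ν.ord.ToType)) :=
      filterTop (Stmt10Proof.fil κ lam μ ν hκ hlam)
    have := mem_closure_iff.mp hcl _ hop (Set.mem_insert _ _)
    obtain ⟨y, hyV, hyA⟩ := this
    rcases Set.mem_insert_iff.mp hyV with rfl | ⟨z, ⟨x, ⟨hx1, hx2⟩, hxz⟩, hzy⟩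
    · exact hA hyA
    · refine hx2 ⟨x.1, ?_⟩
      rw [← hzy, ← hxz] at hyA
      simpa using hyA
  · -- fNorm
    obtain ⟨a0⟩ := hKne
    haveI : Infinite μ.ord.ToType := (by rw [Cardinal.infinite_iff, mkU]; exact hμ)
    have hgen : #↥(Stmt10Proof.gen κ μ ν a0 (∅ : Set μ.ord.ToType)) = μ := by
      apply le_antisymm
      · calc #↥(Stmt10Proof.gen κ μ ν a0 ∅)
            = #↥{x : κ.ord.ToType × μ.ord.ToType | a0 < x.1 ∧ x.2 ∉ (∅ : Set _)} :=
              Cardinal.mk_image_eq Sum.inl_injective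
          _ ≤ #(κ.ord.ToType × μ.ord.ToType) := Cardinal.mk_set_le _
          _ = κ * μ := by rw [Cardinal.mk_prod, Cardinal.lift_id, Cardinal.lift_id, mkK, mkU]
          _ = μ := by rw [Cardinal.mul_eq_max hκ hμ, max_eq_right hκμ]
      · obtain ⟨b, hb⟩ := exists_gt a0
        have := Cardinal.mk_le_of_injective (f := fun u : μ.ord.ToType =>
          (⟨Sum.inl (b, u), ⟨(b, u), ⟨hb, Set.notMem_empty _⟩, rfl⟩⟩ :
            ↥(Stmt10Proof.gen κ μ ν a0 ∅))) ?_
        · rwa [mkU] at this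
        · intro u1 u2 h
          have := congrArg Subtype.val h
          simp only [Sum.inl.injEq, Prod.mk.injEq] at this
          exact this.2
    have hmem : μ ∈ {c | ∃ P ∈ Stmt10Proof.fil κ lam μ ν hκ hlam, c = #↥P} :=
      ⟨Stmt10Proof.gen κ μ ν a0 ∅,
        Stmt10Proof.gen_mem hκ hlam (by simpa using aleph0_pos.trans_le hlam), hgen.symm⟩
    refine le_antisymm (csInf_le' hmem) (le_csInf ⟨μ, hmem⟩ ?_)
    rintro c ⟨P, hP, rfl⟩
    obtain ⟨a, S, hS, h⟩ := hP
    obtain ⟨b, hb⟩ := exists_gt a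
    have hcompl : #↥(Sᶜ) = μ := by
      rw [Cardinal.mk_compl_of_infinite S (by rw [mkU]; exact hS.trans_le h2), mkU]
    have hle : #↥(Sᶜ) ≤ #↥P := by
      refine Cardinal.mk_le_of_injective (f := fun u : ↥(Sᶜ) =>
        (⟨Sum.inl (b, u.1), h (b, u.1) hb u.2⟩ : ↥P)) ?_
      intro u1 u2 hh
      have := congrArg Subtype.val hh
      simp only [Sum.inl.injEq, Prod.mk.injEq] at this
      exact Subtype.ext this.2
    rwa [hcompl] at hle
end

section
/- If X_p is a weakly p-orderable filter space, then the product space X_p × X_p is weakly orderable by a linear order in which (p, p) is the maximum element. -/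
open Set

universe u v w y

section Stmt15Aux

variable {X : Type u}

/-- Kind of a pair: classifies where the `none` coordinates are. -/
def myK [LinearOrder (Option X)] (z : Option X × Option X) : ℕ :=
  match z with
  | (_, none) => 1
  | (none, some _) => 3
  | (some x, some y) => if (some x : Option X) ≤ some y then 0 else 2

/-- The order-embedding key. -/
def myE [LinearOrder (Option X)] (z : Option X × Option X) :
    Lex (Option X × Lex (ℕ × Option X)) :=
  toLex (min z.1 z.2, toLex (myK z, max z.1 z.2))

def myDec [LinearOrder (Option X)] (m : Option X) (c : ℕ) (M : Option X) :
    Option X × Option X :=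
  if c = 1 then (m, none) else if c = 3 then (none, m) else if c = 0 then (m, M) else (M, m)

lemma myDec_myE [LinearOrder (Option X)] (htop : ∀ y : Option X, y ≤ none)
    (z : Option X × Option X) : myDec (min z.1 z.2) (myK z) (max z.1 z.2) = z := by
  obtain ⟨z1, z2⟩ := z
  rcases z2 with _ | b
  · rcases z1 with _ | a
    · show myDec (min (none : Option X) none) 1 (max (none : Option X) none) = _
      rw [myDec, if_pos rfl, min_self]
    · show myDec (min (some a) none) 1 (max (some a) none) = _
      rw [myDec, if_pos rfl, min_eq_left (htop (some a))]
  · rcases z1 with _ | a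
    · show myDec (min none (some b)) 3 (max none (some b)) = _
      rw [myDec, if_neg (by norm_num), if_pos rfl, min_eq_right (htop (some b))]
    · show myDec (min (some a) (some b)) (if (some a : Option X) ≤ some b then 0 else 2)
        (max (some a) (some b)) = _
      by_cases hab : (some a : Option X) ≤ some b
      · rw [if_pos hab, myDec, if_neg (by norm_num), if_neg (by norm_num), if_pos rfl,
          min_eq_left hab, max_eq_right hab]
      · have hba : (some b : Option X) ≤ some a := le_of_not_ge hab
        rw [if_neg hab, myDec, if_neg (by norm_num), if_neg (by norm_num),
          if_neg (by norm_num), min_eq_right hba, max_eq_left hba]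

lemma myE_inj [LinearOrder (Option X)] (htop : ∀ y : Option X, y ≤ none) :
    Function.Injective (myE (X := X)) := by
  intro z w h
  rw [myE, myE, toLex_inj, Prod.mk.injEq, toLex_inj, Prod.mk.injEq] at h
  obtain ⟨h1, h2, h3⟩ := h
  rw [← myDec_myE htop z, ← myDec_myE htop w, h1, h2, h3]

lemma myK_le3 [LinearOrder (Option X)] (z1 z2 : Option X) : myK (z1, z2) ≤ 3 := by
  rcases z1 with _ | a <;> rcases z2 with _ | b <;> simp [myK] <;> split <;> norm_num

lemma myK_eq_one [LinearOrder (Option X)] (htop : ∀ y : Option X, y ≤ none)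
    {z1 z2 : Option X} (h : myK (z1, z2) = 1) : max z1 z2 = none := by
  rcases z2 with _ | b
  · exact max_eq_right (htop z1)
  · exfalso
    rcases z1 with _ | a
    · exact absurd h (by norm_num [myK])
    · revert h
      show (if (some a : Option X) ≤ some b then 0 else 2) = 1 → False
      split <;> norm_num

lemma myK_eq_three [LinearOrder (Option X)] (htop : ∀ y : Option X, y ≤ none)
    {z1 z2 : Option X} (h : myK (z1, z2) = 3) : max z1 z2 = none := by
  rcases z2 with _ | b
  · exact max_eq_right (htop z1)
  · rcases z1 with _ | a
    · exact max_eq_left (htop (some b))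
    · exfalso; revert h
      show (if (some a : Option X) ≤ some b then 0 else 2) = 3 → False
      split <;> norm_num

lemma myK_eq_two [LinearOrder (Option X)]
    {z1 z2 : Option X} (h : myK (z1, z2) = 2) : max z1 z2 ≠ none := by
  rcases z2 with _ | b
  · exact absurd h (by rcases z1 with _ | a <;> norm_num [myK])
  · rcases z1 with _ | a
    · exact absurd h (by norm_num [myK])
    · intro hmax
      rcases max_choice (some a : Option X) (some b) with hc | hc <;> simp [hc] at hmax

lemma myK_eq_zero [LinearOrder (Option X)]
    {z1 z2 : Option X} (h : myK (z1, z2) = 0) :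
    z1 ≤ z2 ∧ z2 ≠ none ∧ min z1 z2 = z1 ∧ max z1 z2 = z2 := by
  rcases z2 with _ | b
  · exact absurd h (by rcases z1 with _ | a <;> norm_num [myK])
  · rcases z1 with _ | a
    · exact absurd h (by norm_num [myK])
    · revert h
      show (if (some a : Option X) ≤ some b then 0 else 2) = 0 → _
      split
      · rename_i hle
        exact fun _ => ⟨hle, by simp, min_eq_left hle, max_eq_right hle⟩
      · norm_num

lemma myE_pair [LinearOrder (Option X)] (w1 w2 : Option X) :
    myE (w1, w2) = toLex (min w1 w2, toLex (myK (w1, w2), max w1 w2)) := rfl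

lemma myE_none_some [LinearOrder (Option X)] (htop : ∀ y : Option X, y ≤ none) (b : X) :
    myE ((none : Option X), some b) = toLex (some b, toLex (3, (none : Option X))) := by
  rw [myE_pair, show myK ((none : Option X), some b) = 3 from rfl,
    min_eq_right (htop (some b)), max_eq_left (htop (some b))]

lemma myE_some_none [LinearOrder (Option X)] (htop : ∀ y : Option X, y ≤ none) (a : X) :
    myE (some a, (none : Option X)) = toLex (some a, toLex (1, (none : Option X))) := by
  rw [myE_pair, show myK (some a, (none : Option X)) = 1 from rfl,
    min_eq_left (htop (some a)), max_eq_right (htop (some a))]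

lemma myE_top [LinearOrder (Option X)] :
    myE ((none : Option X), (none : Option X))
      = toLex (none, toLex (1, (none : Option X))) := by
  rw [myE_pair, show myK ((none : Option X), (none : Option X)) = 1 from rfl,
    min_self, max_self]

lemma myE_gt [LinearOrder (Option X)] {b x : X} (h : (some b : Option X) < some x) :
    myE (some x, some b) = toLex (some b, toLex (2, some x)) := by
  rw [myE_pair, show myK (some x, some b)
      = if (some x : Option X) ≤ some b then 0 else 2 from rfl,
    if_neg (not_le.mpr h), min_eq_right h.le, max_eq_left h.le]

lemma myE_le' [LinearOrder (Option X)] {a y : X} (h : (some a : Option X) ≤ some y) :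
    myE (some a, some y) = toLex (some a, toLex (0, some y)) := by
  rw [myE_pair, show myK (some a, some y)
      = if (some a : Option X) ≤ some y then 0 else 2 from rfl,
    if_pos h, min_eq_left h, max_eq_right h]

lemma myLex_lt {α : Type*} {β : Type*} [LinearOrder α] [LinearOrder β]
    {m1 m2 : α} {k1 k2 : ℕ} {M1 M2 : β} :
    toLex (m1, toLex (k1, M1)) < toLex (m2, toLex (k2, M2)) ↔
      (m1 < m2 ∨ (m1 = m2 ∧ (k1 < k2 ∨ (k1 = k2 ∧ M1 < M2)))) := by
  simp [Prod.Lex.lt_iff]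

lemma myLex_le {α : Type*} {β : Type*} [LinearOrder α] [LinearOrder β]
    {m1 m2 : α} {k1 k2 : ℕ} {M1 M2 : β} :
    toLex (m1, toLex (k1, M1)) ≤ toLex (m2, toLex (k2, M2)) ↔
      (m1 < m2 ∨ (m1 = m2 ∧ (k1 < k2 ∨ (k1 = k2 ∧ M1 ≤ M2)))) := by
  simp [Prod.Lex.le_iff, Prod.Lex.lt_iff]

lemma my_singleton_open (p : Filter X) (x : X) : (filterTop p).IsOpen {some x} := by
  intro h
  simp at h

lemma my_crit (p : Filter X) [LinearOrder (Option X)]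
    (hray : ∀ c : Option X, (filterTop p).IsOpen {w | c < w})
    (S : Set (Option X × Option X))
    (h1 : ∀ b : X, (none, some b) ∈ S →
      ∃ c : Option X, c < none ∧ ∀ w1, c < w1 → (w1, some b) ∈ S)
    (h2 : ∀ a : X, (some a, none) ∈ S →
      ∃ c : Option X, c < none ∧ ∀ w2, c < w2 → (some a, w2) ∈ S)
    (h3 : ((none : Option X), (none : Option X)) ∈ S →
      ∃ c : Option X, c < none ∧ ∀ w1 w2, c < w1 → c < w2 → (w1, w2) ∈ S) :
    (prodTop (filterTop p) (filterTop p)).IsOpen S := by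
  letI : TopologicalSpace (Option X) := filterTop p
  show IsOpen S
  rw [isOpen_iff_forall_mem_open]
  rintro ⟨z1, z2⟩ hz
  rcases z1 with _ | a <;> rcases z2 with _ | b
  · obtain ⟨c, hc, hall⟩ := h3 hz
    refine ⟨{w | c < w} ×ˢ {w | c < w}, ?_, IsOpen.prod (hray c) (hray c), ⟨hc, hc⟩⟩
    rintro ⟨w1, w2⟩ ⟨hw1, hw2⟩
    exact hall w1 w2 hw1 hw2
  · obtain ⟨c, hc, hall⟩ := h1 b hz
    refine ⟨{w | c < w} ×ˢ {some b}, ?_, IsOpen.prod (hray c) (my_singleton_open p b), ⟨hc, rfl⟩⟩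
    rintro ⟨w1, w2⟩ ⟨hw1, hw2⟩
    simp only [Set.mem_singleton_iff] at hw2
    rw [hw2]; exact hall w1 hw1
  · obtain ⟨c, hc, hall⟩ := h2 a hz
    refine ⟨{some a} ×ˢ {w | c < w}, ?_, IsOpen.prod (my_singleton_open p a) (hray c), ⟨rfl, hc⟩⟩
    rintro ⟨w1, w2⟩ ⟨hw1, hw2⟩
    simp only [Set.mem_singleton_iff] at hw1
    rw [hw1]; exact hall w2 hw2
  · refine ⟨{some a} ×ˢ {some b}, ?_,
      IsOpen.prod (my_singleton_open p a) (my_singleton_open p b), ⟨rfl, rfl⟩⟩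
    rintro ⟨w1, w2⟩ ⟨hw1, hw2⟩
    simp only [Set.mem_singleton_iff] at hw1 hw2
    rw [hw1, hw2]; exact hz

end Stmt15Aux

/-- If `X_p` is a weakly `p`-orderable filter space, then `X_p × X_p` is
weakly orderable by a linear order in which `(p, p)` is the maximum. -/
theorem stmt15 {X : Type u} [Infinite X] (p : Filter X) (hfree : IsFree p)
    (h : WeaklyPOrderable (filterTop p) (none : Option X)) :
    ∃ r : LinearOrder (Option X × Option X),
      WOBy (prodTop (filterTop p) (filterTop p)) r ∧
      ∀ z : Option X × Option X, r.le z (none, none) := by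
  classical
  obtain ⟨r, hwo, hmax⟩ := h
  letI : LinearOrder (Option X) := r
  have htop : ∀ y : Option X, y ≤ none := hmax
  have hltnone : ∀ y : Option X, y ≠ none → y < none := fun y hy => lt_of_le_of_ne (htop y) hy
  have hminn : ∀ z1 z2 : Option X, min z1 z2 = none → z1 = none ∧ z2 = none := by
    intro z1 z2 hm
    exact ⟨le_antisymm (htop z1) (hm ▸ min_le_left z1 z2),
      le_antisymm (htop z2) (hm ▸ min_le_right z1 z2)⟩
  have hray : ∀ c : Option X, (filterTop p).IsOpen {w | c < w} := fun c =>
    hwo _ (TopologicalSpace.GenerateOpen.basic _ ⟨c, Or.inr rfl⟩)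
  refine ⟨LinearOrder.lift' myE (myE_inj htop), ?_, ?_⟩
  · -- weak orderability of the product
    intro S hS
    have hgen : TopologicalSpace.GenerateOpen
        {T : Set (Option X × Option X) |
          ∃ a, T = {z | myE z < myE a} ∨ T = {z | myE a < myE z}} S := hS
    clear hS
    induction hgen with
    | @basic T hT =>
        obtain ⟨a, ha⟩ := hT
        obtain ⟨a1, a2⟩ := a
        rcases ha with rfl | rfl
        · -- lower ray {z | myE z < myE (a1, a2)}
          refine my_crit p hray _ ?_ ?_ ?_
          · intro b hb
            rw [Set.mem_setOf_eq, myE_none_some htop, myE_pair a1 a2, myLex_lt] at hb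
            have hbm : (some b : Option X) < min a1 a2 := by
              rcases hb with h | ⟨heq, h | ⟨h3, hM⟩⟩
              · exact h
              · exact absurd h (by have := myK_le3 (X := X) a1 a2; omega)
              · exact absurd hM (not_lt.mpr (htop _))
            refine ⟨some b, hltnone _ (by simp), fun w1 _ => ?_⟩
            rw [Set.mem_setOf_eq, myE_pair w1 (some b), myE_pair a1 a2, myLex_lt]
            exact Or.inl (lt_of_le_of_lt (min_le_right w1 (some b)) hbm)
          · intro a hb
            rw [Set.mem_setOf_eq, myE_some_none htop, myE_pair a1 a2, myLex_lt] at hb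
            rcases hb with h | ⟨heq, hrest⟩
            · refine ⟨some a, hltnone _ (by simp), fun w2 _ => ?_⟩
              rw [Set.mem_setOf_eq, myE_pair (some a) w2, myE_pair a1 a2, myLex_lt]
              exact Or.inl (lt_of_le_of_lt (min_le_left (some a) w2) h)
            · have hk2 : 1 < myK (a1, a2) := by
                rcases hrest with h | ⟨_, hM⟩
                · exact h
                · exact absurd hM (not_lt.mpr (htop _))
              refine ⟨some a, hltnone _ (by simp), fun w2 hw2 => ?_⟩
              rw [Set.mem_setOf_eq]
              cases w2 with
              | none =>
                  rw [myE_some_none htop, myE_pair a1 a2, myLex_lt]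
                  exact Or.inr ⟨heq, Or.inl hk2⟩
              | some y =>
                  rw [myE_le' hw2.le, myE_pair a1 a2, myLex_lt]
                  exact Or.inr ⟨heq, Or.inl (by omega)⟩
          · intro hb
            exfalso
            rw [Set.mem_setOf_eq, myE_top, myE_pair a1 a2, myLex_lt] at hb
            rcases hb with h | ⟨heq, hrest⟩
            · exact absurd h (not_lt.mpr (htop _))
            · obtain ⟨h1, h2⟩ := hminn a1 a2 heq.symm
              subst h1; subst h2
              rcases hrest with h | ⟨_, hM⟩
              · rw [show myK ((none : Option X), (none : Option X)) = 1 from rfl] at h; omega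
              · rw [max_self] at hM; exact absurd hM (lt_irrefl _)
        · -- upper ray {z | myE (a1, a2) < myE z}
          refine my_crit p hray _ ?_ ?_ ?_
          · intro b hb
            rw [Set.mem_setOf_eq, myE_pair a1 a2, myE_none_some htop, myLex_lt] at hb
            rcases hb with h | ⟨heq, hrest⟩
            · refine ⟨some b, hltnone _ (by simp), fun w1 hw1 => ?_⟩
              rw [Set.mem_setOf_eq, myE_pair a1 a2, myE_pair w1 (some b), myLex_lt,
                min_eq_right hw1.le]
              exact Or.inl h
            · have hk3 : myK (a1, a2) < 3 := by
                rcases hrest with h | ⟨h3, hM⟩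
                · exact h
                · rw [myK_eq_three htop h3] at hM; exact absurd hM (lt_irrefl _)
              by_cases hk2 : myK (a1, a2) = 2
              · have hMne := myK_eq_two hk2
                refine ⟨max (some b) (max a1 a2),
                  max_lt (hltnone _ (by simp)) (hltnone _ hMne), fun w1 hw1 => ?_⟩
                have hbw : (some b : Option X) < w1 := lt_of_le_of_lt (le_max_left _ _) hw1
                have hMw : max a1 a2 < w1 := lt_of_le_of_lt (le_max_right _ _) hw1
                rw [Set.mem_setOf_eq]
                cases w1 with
                | none =>
                    rw [myE_none_some htop, myE_pair a1 a2, myLex_lt]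
                    exact Or.inr ⟨heq, Or.inl hk3⟩
                | some x =>
                    rw [myE_gt hbw, myE_pair a1 a2, myLex_lt]
                    exact Or.inr ⟨heq, Or.inr ⟨hk2, hMw⟩⟩
              · have hk1 : myK (a1, a2) < 2 := by omega
                refine ⟨some b, hltnone _ (by simp), fun w1 hw1 => ?_⟩
                rw [Set.mem_setOf_eq]
                cases w1 with
                | none =>
                    rw [myE_none_some htop, myE_pair a1 a2, myLex_lt]
                    exact Or.inr ⟨heq, Or.inl hk3⟩
                | some x =>
                    rw [myE_gt hw1, myE_pair a1 a2, myLex_lt]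
                    exact Or.inr ⟨heq, Or.inl hk1⟩
          · intro a hb
            rw [Set.mem_setOf_eq, myE_pair a1 a2, myE_some_none htop, myLex_lt] at hb
            rcases hb with h | ⟨heq, hrest⟩
            · refine ⟨some a, hltnone _ (by simp), fun w2 hw2 => ?_⟩
              rw [Set.mem_setOf_eq, myE_pair a1 a2, myE_pair (some a) w2, myLex_lt,
                min_eq_left hw2.le]
              exact Or.inl h
            · have hk0 : myK (a1, a2) = 0 := by
                rcases hrest with h | ⟨h1, hM⟩
                · omega
                · rw [myK_eq_one htop h1] at hM; exact absurd hM (lt_irrefl _)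
              obtain ⟨hle, hne, hmin, hmax'⟩ := myK_eq_zero hk0
              have ha1 : a1 = some a := by rw [← hmin, heq]
              refine ⟨max a1 a2, by rw [hmax']; exact hltnone _ hne, fun w2 hw2 => ?_⟩
              rw [Set.mem_setOf_eq]
              cases w2 with
              | none =>
                  rw [myE_some_none htop, myE_pair a1 a2, myLex_lt]
                  exact Or.inr ⟨heq, Or.inl (by omega)⟩
              | some y =>
                  have hay : (some a : Option X) ≤ some y := by
                    rw [← ha1]
                    exact hle.trans (le_of_lt (lt_of_le_of_lt (le_max_right a1 a2) hw2))
                  rw [myE_le' hay, myE_pair a1 a2, myLex_lt]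
                  exact Or.inr ⟨heq, Or.inr ⟨hk0, hw2⟩⟩
          · intro hb
            rw [Set.mem_setOf_eq, myE_pair a1 a2, myE_top, myLex_lt] at hb
            have hmne : min a1 a2 ≠ none := by
              intro hm
              obtain ⟨h1, h2⟩ := hminn a1 a2 hm
              subst h1; subst h2
              rcases hb with h | ⟨heq, hrest⟩
              · rw [min_self] at h; exact absurd h (lt_irrefl _)
              · rcases hrest with h | ⟨_, hM⟩
                · rw [show myK ((none : Option X), (none : Option X)) = 1 from rfl] at h
                  omega
                · rw [max_self] at hM; exact absurd hM (lt_irrefl _)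
            refine ⟨min a1 a2, hltnone _ hmne, fun w1 w2 hw1 hw2 => ?_⟩
            rw [Set.mem_setOf_eq, myE_pair a1 a2, myE_pair w1 w2, myLex_lt]
            exact Or.inl (lt_min hw1 hw2)
    | univ => exact (prodTop (filterTop p) (filterTop p)).isOpen_univ
    | inter T1 T2 _ _ ih1 ih2 =>
        exact (prodTop (filterTop p) (filterTop p)).isOpen_inter _ _ ih1 ih2
    | sUnion K _ ih =>
        exact (prodTop (filterTop p) (filterTop p)).isOpen_sUnion _ ih
  · -- (none, none) is the maximum
    intro z
    show myE z ≤ myE ((none : Option X), (none : Option X))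
    rw [myE_top]
    obtain ⟨z1, z2⟩ := z
    rw [myE_pair z1 z2]
    by_cases hm : min z1 z2 = none
    · obtain ⟨h1, h2⟩ := hminn z1 z2 hm
      subst h1; subst h2
      rw [min_self, max_self, show myK ((none : Option X), (none : Option X)) = 1 from rfl]
    · rw [myLex_le]
      exact Or.inl (hltnone _ hm)
end

section
/- Let κ be an uncountable regular cardinal and let S be a stationary subset of κ, equipped with the subspace topology induced by the order topology on κ. Then S is non-discrete and a(S) < κ; that is, there is a non-isolated point p of S and a set A ⊆ S \ {p} of cardinality less than κ with p ∈ closure(A). -/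
open Set

universe u v w y

lemma aux_ordTop_eq :
    ordTop (inferInstance : LinearOrder Ordinal.{u}) =
      (inferInstance : TopologicalSpace Ordinal.{u}) := by
  rw [(OrderTopology.topology_eq_generate_intervals (α := Ordinal.{u}) : _)]
  unfold ordTop
  congr 1
  ext s
  exact ⟨fun ⟨a, h⟩ => ⟨a, h.symm⟩, fun ⟨a, h⟩ => ⟨a, h.symm⟩⟩

/-- Let `κ` be an uncountable regular cardinal and `S` a stationary subset
of `κ` with the subspace topology from the order topology. Then `S` is non-discrete and
`a(S) < κ`: there is a non-isolated point `p` of `S` and a set `A ⊆ S \ {p}` of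
cardinality `< κ` with `p ∈ closure A`. -/
theorem stmt17 (κ : Cardinal.{u}) (huncount : Cardinal.aleph0 < κ)
    (hreg : κ.ord.cof = κ)
    (S : Set Ordinal.{u}) (hS : StationaryIn κ.ord S) :
    ∃ p : ↥S,
      ¬ (subTop (ordTop (inferInstance : LinearOrder Ordinal.{u})) S).IsOpen
          ({p} : Set ↥S) ∧
      ∃ A : Set ↥S, p ∉ A ∧
        p ∈ @closure ↥S (subTop (ordTop (inferInstance : LinearOrder Ordinal.{u})) S) A ∧
        Cardinal.mk ↥A < Cardinal.lift.{u + 1} κ := by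
  have htop : subTop (ordTop (inferInstance : LinearOrder Ordinal.{u})) S =
      (inferInstance : TopologicalSpace ↥S) := by
    rw [aux_ordTop_eq]; rfl
  rw [htop]
  have hℵ0 : Cardinal.aleph0 ≤ κ := huncount.le
  have hlim : Order.IsSuccLimit κ.ord := Cardinal.isSuccLimit_ord hℵ0
  -- S is unbounded in κ.ord
  have hSu : ∀ α < κ.ord, ∃ s, s ∈ S ∧ α < s ∧ s < κ.ord := by
    intro α hα
    have hclub : Club κ.ord (Set.Ioo α κ.ord) := by
      refine ⟨fun x hx => hx.2, fun β hβ => ?_, fun β hβ hβl h => ?_⟩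
      · exact ⟨max (Order.succ α) β, ⟨lt_of_lt_of_le (Order.lt_succ α) (le_max_left _ _),
          max_lt (hlim.succ_lt hα) hβ⟩, le_max_right _ _⟩
      · obtain ⟨γ, hγ, _, hγβ⟩ := h 0 hβl.pos
        exact ⟨hγ.1.trans hγβ, hβ⟩
    obtain ⟨s, hsS, hs⟩ := hS.2 _ hclub
    exact ⟨s, hsS, hs.1, hs.2⟩
  choose! g hg1 hg2 hg3 using hSu
  -- the set of limit points of S below κ.ord is a club
  set C : Set Ordinal.{u} :=
    {β | β < κ.ord ∧ 0 < β ∧ ∀ γ < β, ∃ s ∈ S, γ < s ∧ s < β} with hCdef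
  have hclub : Club κ.ord C := by
    refine ⟨fun x hx => hx.1, ?_, ?_⟩
    · intro α hα
      set f : ℕ → Ordinal.{u} := fun n => g^[n] α with hfdef
      have hfκ : ∀ n, f n < κ.ord := by
        intro n; induction n with
        | zero => exact hα
        | succ n ih =>
          have : f (n+1) = g (f n) := Function.iterate_succ_apply' g n α
          rw [this]; exact hg3 _ ih
      have hfsucc : ∀ n, f (n+1) = g (f n) := fun n => Function.iterate_succ_apply' g n α
      have hflt : ∀ n, f n < f (n+1) := fun n => by rw [hfsucc n]; exact hg2 _ (hfκ n)
      have hfS : ∀ n, f (n+1) ∈ S := fun n => by rw [hfsucc n]; exact hg1 _ (hfκ n)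
      set β := ⨆ n, f n with hβdef
      have hbdd : BddAbove (Set.range f) := ⟨κ.ord, by rintro x ⟨n, rfl⟩; exact (hfκ n).le⟩
      have hfle : ∀ n, f n ≤ β := fun n => le_ciSup hbdd n
      have hβκ : β < κ.ord := by
        apply Ordinal.iSup_lt_ord_lift _ hfκ
        rw [hreg]
        simpa using huncount
      have hlt : ∀ γ < β, ∃ n, γ < f n := by
        intro γ hγ
        by_contra h
        push_neg at h
        exact hγ.not_ge (ciSup_le h)
      refine ⟨β, ⟨hβκ, ?_, ?_⟩, (hfle 0)⟩
      · exact lt_of_le_of_lt (by simp : (0:Ordinal) ≤ α) (lt_of_lt_of_le (hflt 0) (hfle 1))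
      · intro γ hγ
        obtain ⟨n, hn⟩ := hlt γ hγ
        exact ⟨f (n+1), hfS n, hn.trans (hflt n), lt_of_lt_of_le (hflt (n+1)) (hfle (n+2))⟩
    · intro α hα hαlim h
      refine ⟨hα, hαlim.pos, fun γ hγ => ?_⟩
      obtain ⟨c, hcC, hc1, hc2⟩ := h (Order.succ γ) (hαlim.succ_lt hγ)
      obtain ⟨s, hsS, hγs, hsc⟩ := hcC.2.2 γ (lt_of_lt_of_le (Order.lt_succ γ) hc1)
      exact ⟨s, hsS, hγs, hsc.trans hc2⟩
  obtain ⟨p, hpS, hpC⟩ := hS.2 C hclub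
  have hclosure : (⟨p, hpS⟩ : ↥S) ∈ closure {x : ↥S | (x : Ordinal) < p} := by
      rw [closure_subtype]
      have h41 := (Ordinal.mem_closure_tfae p (Subtype.val '' {x : ↥S | (x : Ordinal) < p})).out 3 0
      apply h41.mp
      refine ⟨S ∩ Iio p, ?_, ?_, ⟨p, fun x hx => hx.2.le⟩, ?_⟩
      · rintro x ⟨hxS, hxp⟩
        exact ⟨⟨x, hxS⟩, hxp, rfl⟩
      · obtain ⟨s, hsS, h0s, hsp⟩ := hpC.2.2 0 hpC.2.1
        exact ⟨s, hsS, hsp⟩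
      · apply le_antisymm
        · exact csSup_le ⟨_, (hpC.2.2 0 hpC.2.1).choose_spec.1,
            (hpC.2.2 0 hpC.2.1).choose_spec.2.2⟩ fun x hx => hx.2.le
        · by_contra hcon
          push_neg at hcon
          obtain ⟨s, hsS, hlt', hsp⟩ := hpC.2.2 _ hcon
          exact hlt'.not_ge (le_csSup ⟨p, fun x hx => hx.2.le⟩ ⟨hsS, hsp⟩)
  have hcard : Cardinal.mk ↥{x : ↥S | (x : Ordinal) < p} < Cardinal.lift.{u+1} κ := by
    calc Cardinal.mk ↥{x : ↥S | (x : Ordinal) < p}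
          = Cardinal.mk ↥(Subtype.val '' {x : ↥S | (x : Ordinal) < p}) :=
            (Cardinal.mk_image_eq Subtype.val_injective).symm
        _ ≤ Cardinal.mk ↥(Iio p) :=
            Cardinal.mk_le_mk_of_subset (by rintro x ⟨y, hy, rfl⟩; exact hy)
        _ = Cardinal.lift.{u+1} p.card := Ordinal.mk_Iio_ordinal p
        _ < Cardinal.lift.{u+1} κ :=
            Cardinal.lift_lt.2 (Cardinal.lt_ord.1 (hS.1 hpS))
  refine ⟨⟨p, hpS⟩, ?_, {x : ↥S | (x : Ordinal) < p}, by simp, hclosure, hcard⟩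
  intro hopen
  obtain ⟨x, hx1, hx2⟩ := mem_closure_iff.1 hclosure _ hopen (mem_singleton _)
  rw [mem_singleton_iff] at hx1
  subst hx1
  exact absurd hx2 (by simp)
end
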